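/- Let G be an abelian group, λ an integer such that the map x ↦ λx is injective on G, B a finite nonempty subset of G, and K > 0 a real number such that |B + λ·B| ≤ K|B|. Then |B + B + λ·B| ≤ K^7|B|. -/

import Mathlib

open Pointwise Finset

/-- Let `G` be an abelian group, `λ` an integer such that `x ↦ λx` is injective on `G`,
`B` a finite nonempty subset of `G`, and `K > 0` with `|B + λ·B| ≤ K|B|` (where
`λ·B = {λb : b ∈ B}` and `+` is the Minkowski sum). Then `|B + B + λ·B| ≤ K^7|B|`. -/
theorem card_add_add_dilate_le {G : Type*} [AddCommGroup G] [DecidableEq G]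
    (lam : ℤ) (hlam : Function.Injective fun x : G => lam • x)
    (B : Finset G) (hB : B.Nonempty) (K : ℝ) (hK : 0 < K)
    (h : ((B + B.image fun b => lam • b).card : ℝ) ≤ K * B.card) :
    ((B + B + B.image fun b => lam • b).card : ℝ) ≤ K ^ 7 * B.card := by
  set L : Finset G := B.image fun b => lam • b with hL
  have hLcard : (L.card : ℝ) = B.card := by
    rw [hL, card_image_of_injective _ hlam]
  have hLne : L.Nonempty := hB.image _
  have hBpos : (0:ℝ) < B.card := by exact_mod_cast hB.card_pos
  have hK1 : 1 ≤ K := by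
    have h1 : (B.card : ℝ) ≤ (B + L).card := by
      exact_mod_cast card_le_card_add_right hLne
    nlinarith
  -- Plünnecke-Ruzsa with A = L : #(B+B+B) ≤ K^3 * #B
  have hplue := Finset.pluennecke_ruzsa_inequality_nsmul_add hLne B 3
  have hLB : ((L + B).card : ℝ) ≤ K * B.card := by
    rwa [add_comm] at h
  have h3 : ((3 • B).card : ℝ) ≤ K ^ 3 * B.card := by
    have hq : ((3 • B).card : ℝ) ≤ ((L + B).card / L.card : ℝ) ^ 3 * L.card := by
      have := hplue
      have : (((3 • B).card : ℚ≥0) : ℝ) ≤ ((((L + B).card : ℚ≥0) / (L.card : ℚ≥0)) ^ 3 * (L.card : ℚ≥0) : ℚ≥0) := by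
        exact_mod_cast this
      simpa using this
    refine hq.trans ?_
    rw [hLcard]
    have hdiv : ((L + B).card / B.card : ℝ) ≤ K := by
      rw [div_le_iff₀ hBpos]; exact hLB
    have h0 : (0:ℝ) ≤ ((L + B).card / B.card : ℝ) := by positivity
    gcongr
  have h3' : ((B + B + B).card : ℝ) ≤ K ^ 3 * B.card := by
    have : 3 • B = B + B + B := by
      rw [show (3:ℕ) = 2 + 1 by rfl, add_nsmul, two_nsmul, one_nsmul]
    rwa [this] at h3
  -- Ruzsa triangle: #(B+B+L) * #B ≤ #(B+B+B) * #(B+L)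
  have htri : (((B + B) + L).card : ℝ) * B.card ≤ ((B + B + B).card : ℝ) * (B + L).card := by
    exact_mod_cast Finset.ruzsa_triangle_inequality_add_add_add (B + B) B L
  have hfinal : ((B + B + L).card : ℝ) * B.card ≤ K ^ 4 * B.card * B.card := by
    calc ((B + B + L).card : ℝ) * B.card ≤ ((B + B + B).card : ℝ) * (B + L).card := htri
      _ ≤ (K ^ 3 * B.card) * (K * B.card) := by
          apply mul_le_mul h3' h (by positivity) (by positivity)
      _ = K ^ 4 * B.card * B.card := by ring
  have h4 : ((B + B + L).card : ℝ) ≤ K ^ 4 * B.card := by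
    have := (mul_le_mul_iff_of_pos_right hBpos).mp hfinal
    linarith
  refine h4.trans ?_
  have : K ^ 4 ≤ K ^ 7 := pow_le_pow_right₀ hK1 (by norm_num)
  nlinarith
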